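/- Let (Ω, 𝓕, P) be a probability space, (M, 𝓜) a measurable space, and K a finite transition kernel from Ω to M. Let φₙ, φ : Ω × M → ℝ (n ∈ ℕ) be 𝓕 ⊗ 𝓜-measurable functions such that φₙ converges to φ in measure with respect to the composition measure P ⊗ K on Ω × M. Suppose there exists an 𝓕 ⊗ 𝓜-measurable function ψ : Ω × M → ℝ such that |φₙ(ω, y)| ≤ ψ(ω, y) for all n, ω, y, and ∫_M ψ(ω, y) K(ω, dy) < ∞ for P-almost every ω. Then the functions ω ↦ ∫_M φₙ(ω, y) K(ω, dy) converge in measure P to the function ω ↦ ∫_M φ(ω, y) K(ω, dy). -/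
import Mathlib

open MeasureTheory Filter ProbabilityTheory Topology

/-- Dominated-convergence in measure: if `φ n → φlim` in measure `P ⊗ₘ K` and the `φ n`
are dominated by `ψ` with `∫_M ψ(ω, ·) dK ω < ∞` for `P`-a.e. `ω`, then the kernel integrals
`ω ↦ ∫ φ n (ω, y) dK ω` converge in measure `P` to `ω ↦ ∫ φlim (ω, y) dK ω`. -/
theorem stmt0 {Ω M : Type*} [MeasurableSpace Ω] [MeasurableSpace M]
    (P : Measure Ω) [IsProbabilityMeasure P]
    (K : Kernel Ω M) [IsFiniteKernel K]
    (φ : ℕ → Ω × M → ℝ) (φlim : Ω × M → ℝ) (ψ : Ω × M → ℝ)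
    (hφ : ∀ n, Measurable (φ n)) (hφlim : Measurable φlim) (hψ : Measurable ψ)
    (hconv : TendstoInMeasure (P.compProd K) φ atTop φlim)
    (hdom : ∀ n ω y, |φ n (ω, y)| ≤ ψ (ω, y))
    (hint : ∀ᵐ ω ∂P, ∫⁻ y, ENNReal.ofReal (ψ (ω, y)) ∂(K ω) < ⊤) :
    TendstoInMeasure P (fun n ω => ∫ y, φ n (ω, y) ∂(K ω)) atTop
      (fun ω => ∫ y, φlim (ω, y) ∂(K ω)) := by
  have hψ0 : ∀ ω y, 0 ≤ ψ (ω, y) := fun ω y =>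
    le_trans (abs_nonneg _) (hdom 0 ω y)
  -- measurability of the integral maps
  have hmeasn : ∀ n : ℕ, AEStronglyMeasurable (fun ω => ∫ y, φ n (ω, y) ∂(K ω)) P := fun n =>
    ((hφ n).stronglyMeasurable.integral_kernel_prod_right').aestronglyMeasurable
  have hmeaslim : AEStronglyMeasurable (fun ω => ∫ y, φlim (ω, y) ∂(K ω)) P :=
    (hφlim.stronglyMeasurable.integral_kernel_prod_right').aestronglyMeasurable
  -- ψ(ω,·) is integrable for a.e. ω
  have hψint : ∀ᵐ ω ∂P, Integrable (fun y => ψ (ω, y)) (K ω) := by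
    filter_upwards [hint] with ω hω
    refine ⟨(hψ.comp measurable_prodMk_left).aestronglyMeasurable, ?_⟩
    rw [hasFiniteIntegral_iff_ofReal (Eventually.of_forall fun y => hψ0 ω y)]
    exact hω
  intro ε hε
  refine tendsto_of_subseq_tendsto fun ns hns => ?_
  have hconv' : TendstoInMeasure (P.compProd K) (fun k => φ (ns k)) atTop φlim :=
    fun δ hδ => (hconv δ hδ).comp hns
  obtain ⟨ms, -, hms⟩ := hconv'.exists_seq_tendsto_ae
  -- a.e. pointwise convergence of the integrals along the sub-subsequence
  have hae : ∀ᵐ ω ∂P,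
      Tendsto (fun k => ∫ y, φ (ns (ms k)) (ω, y) ∂(K ω)) atTop
        (𝓝 (∫ y, φlim (ω, y) ∂(K ω))) := by
    filter_upwards [Measure.ae_ae_of_ae_compProd hms, hψint] with ω hω hints
    refine tendsto_integral_of_dominated_convergence (fun y => ψ (ω, y))
      (fun k => ((hφ (ns (ms k))).comp measurable_prodMk_left).aestronglyMeasurable)
      hints (fun k => Eventually.of_forall fun y => ?_) hω
    simpa [Real.norm_eq_abs] using hdom (ns (ms k)) ω y
  have htm : TendstoInMeasure P (fun k ω => ∫ y, φ (ns (ms k)) (ω, y) ∂(K ω)) atTop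
      (fun ω => ∫ y, φlim (ω, y) ∂(K ω)) :=
    tendstoInMeasure_of_tendsto_ae (fun k => hmeasn (ns (ms k))) hae
  exact ⟨ms, htm ε hε⟩
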